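/- Let x(s,t) = Σ_{i,j=1}^N a_{i,j} r_i(s) r_j(t) be a finite double Rademacher sum on the unit square, where r_k(t) = sign(sin(2^{k-1}πt)) are the Rademacher functions. Then for every q ≥ 1, the L^q norm of x on [0,1]² satisfies ‖x‖_q ≤ q·(Σ_{i,j} a_{i,j}²)^{1/2}. -/

import Mathlib

open MeasureTheory Real Set

/-- Rademacher function `r_k(t) = sign (sin (2^(k-1) π t))`. -/
noncomputable def rad (k : ℕ) (t : ℝ) : ℝ :=
  Real.sign (Real.sin (2 ^ (k - 1) * Real.pi * t))

/-- Lebesgue measure on the unit square `[0,1]²`. -/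
noncomputable def μsq : Measure (ℝ × ℝ) :=
  (volume.restrict (Set.Icc (0:ℝ) 1)).prod (volume.restrict (Set.Icc (0:ℝ) 1))

/-- double factorial (2m-1)!! -/
def dfac (m : ℕ) : ℕ := ∏ r ∈ Finset.range m, (2*r+1)

lemma dfac_succ (m : ℕ) : dfac (m+1) = dfac m * (2*m+1) := Finset.prod_range_succ _ _

lemma one_le_dfac (m : ℕ) : 1 ≤ dfac m :=
  Nat.one_le_iff_ne_zero.2 (by
    apply Nat.pos_iff_ne_zero.1
    apply Finset.prod_pos
    intro i _; omega)

lemma dfac_mul (m : ℕ) : dfac m * (2^m * m.factorial) = (2*m).factorial := by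
  induction m with
  | zero => simp [dfac]
  | succ m ih =>
    have h2 : 2*(m+1) = (2*m+1) + 1 := by ring
    have hf : (2*(m+1)).factorial = (2*m+2)*((2*m+1)*(2*m).factorial) := by
      rw [show 2*(m+1) = (2*m+1)+1 by ring, Nat.factorial_succ,
        show (2*m+1) = (2*m)+1 from rfl, Nat.factorial_succ]
    rw [dfac_succ, Nat.factorial_succ, hf, ← ih]
    ring

lemma choose_dfac (r m : ℕ) (h : r ≤ m) :
    (2*m).choose (2*r) * (dfac (m-r) * dfac r) = dfac m * m.choose r := by
  have key1 := dfac_mul (m - r)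
  have key2 := dfac_mul r
  have key3 := dfac_mul m
  have h2r : 2*r ≤ 2*m := by omega
  have c1 := Nat.choose_mul_factorial_mul_factorial h2r
  have c2 := Nat.choose_mul_factorial_mul_factorial h
  have hsub : 2*m - 2*r = 2*(m-r) := by omega
  have hpow : (2:ℕ)^m = 2^(m-r) * 2^r := by rw [← pow_add]; congr 1; omega
  apply Nat.eq_of_mul_eq_mul_right
    (show 0 < 2^m * (r.factorial * (m-r).factorial) by positivity)
  calc (2*m).choose (2*r) * (dfac (m-r) * dfac r) * (2^m * (r.factorial * (m-r).factorial))
      = (2*m).choose (2*r) * ((dfac (m-r) * (2^(m-r) * (m-r).factorial))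
          * (dfac r * (2^r * r.factorial))) := by rw [hpow]; ring
    _ = (2*m).choose (2*r) * ((2*(m-r)).factorial * (2*r).factorial) := by rw [key1, key2]
    _ = (2*m).choose (2*r) * (2*r).factorial * (2*m - 2*r).factorial := by rw [hsub]; ring
    _ = (2*m).factorial := c1
    _ = dfac m * (2^m * m.factorial) := key3.symm
    _ = dfac m * (2^m * (m.choose r * r.factorial * (m-r).factorial)) := by rw [c2]
    _ = dfac m * m.choose r * (2^m * (r.factorial * (m-r).factorial)) := by ring

lemma choose_dfac_le (u m : ℕ) (h : u ≤ m) :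
    ((2*m).choose (2*u) * dfac u : ℝ) ≤ (dfac m * m.choose u : ℕ) := by
  have := choose_dfac u m h
  have h1 : (2*m).choose (2*u) * dfac u ≤ dfac m * m.choose u := by
    calc (2*m).choose (2*u) * dfac u
        ≤ (2*m).choose (2*u) * (dfac (m-u) * dfac u) :=
          Nat.mul_le_mul le_rfl (Nat.le_mul_of_pos_left _ (one_le_dfac (m-u)))
      _ = dfac m * m.choose u := choose_dfac u m h
  exact_mod_cast h1
/-- discrete sign system: value of `rad i` on the `k`-th dyadic interval of size `2^(-N)` -/
noncomputable def nu (N k i : ℕ) : ℝ := (-1) ^ (k / 2 ^ (N - (i - 1)))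

lemma neg_one_pow_testBit (k c : ℕ) :
    ((-1 : ℝ)) ^ (k / 2^c) = if Nat.testBit k c then -1 else 1 := by
  have h := Nat.testBit_eq_decide_div_mod_eq (x := k) (i := c)
  rcases Nat.even_or_odd (k / 2^c) with he | ho
  · rw [he.neg_one_pow]
    have : k / 2^c % 2 = 0 := Nat.even_iff.1 he
    simp [h, this]
  · rw [ho.neg_one_pow]
    have : k / 2^c % 2 = 1 := Nat.odd_iff.1 ho
    simp [h, this]

lemma nu_testBit (N k i : ℕ) :
    nu N k i = if Nat.testBit k (N - (i-1)) then -1 else 1 := neg_one_pow_testBit _ _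

lemma nu_eq_one_or (N k i : ℕ) : nu N k i = 1 ∨ nu N k i = -1 := by
  rw [nu_testBit]; split <;> simp

lemma nu_sq (N k i : ℕ) : nu N k i ^ 2 = 1 := by
  rcases nu_eq_one_or N k i with h | h <;> rw [h] <;> norm_num

lemma nu_xor_ne (N k i b : ℕ) (h : N - (i-1) ≠ b) :
    nu N (k ^^^ 2^b) i = nu N k i := by
  rw [nu_testBit, nu_testBit, Nat.testBit_xor, Nat.testBit_two_pow_of_ne (Ne.symm h)]
  simp

lemma nu_xor_eq (N k i b : ℕ) (h : N - (i-1) = b) :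
    nu N (k ^^^ 2^b) i = - nu N k i := by
  subst h
  rw [nu_testBit, nu_testBit, Nat.testBit_xor, Nat.testBit_two_pow_self]
  cases Nat.testBit k (N - (i-1)) <;> simp

lemma nu_one (N k : ℕ) (hk : k < 2^N) (i : ℕ) (hi : i ≤ 1) : nu N k i = 1 := by
  have h1 : i - 1 = 0 := by omega
  rw [nu, h1]
  simp only [Nat.sub_zero]
  rw [Nat.div_eq_of_lt hk]
  norm_num

/-- sums over `range (2n+1)` of a function vanishing on odd numbers -/
lemma sum_even_range (n : ℕ) (t : ℕ → ℝ) (h : ∀ r, Odd r → r ≤ 2*n → t r = 0) :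
    ∑ r ∈ Finset.range (2*n+1), t r = ∑ u ∈ Finset.range (n+1), t (2*u) := by
  induction n with
  | zero => simp
  | succ n ih =>
    have h1 : 2*(n+1)+1 = (2*n+1) + 1 + 1 := by ring
    rw [h1, Finset.sum_range_succ, Finset.sum_range_succ (n := 2*n+1),
      Finset.sum_range_succ (n := n+1),
      ih (fun r hr hr' => h r hr (by omega)),
      h (2*n+1) ⟨n, by ring⟩ (by omega)]
    have h2 : 2*n+1+1 = 2*(n+1) := by ring
    rw [h2]
    ring

/-- a sum over `range (2^N)` of a function which is odd under flipping bit `b < N` vanishes -/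
lemma sum_flip_vanish (N b : ℕ) (hb : b < N) (F : ℕ → ℝ)
    (hF : ∀ k, F (k ^^^ 2^b) = - F k) :
    ∑ k ∈ Finset.range (2^N), F k = 0 := by
  have hmem : ∀ k ∈ Finset.range (2^N), k ^^^ 2^b ∈ Finset.range (2^N) := by
    intro k hk
    simp only [Finset.mem_range] at hk ⊢
    exact Nat.xor_lt_two_pow hk (Nat.pow_lt_pow_right (by norm_num) hb)
  exact Finset.sum_involution (fun k _ => k ^^^ 2^b)
    (fun k _ => by rw [hF k]; ring)
    (fun k _ hk hfix => hk (by
      have h1 := hF k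
      have h2 : k ^^^ 2^b = k := hfix
      rw [h2] at h1; linarith))
    hmem
    (fun k _ => Nat.xor_xor_cancel_right _ _)

lemma khintchine_aux (N : ℕ) (s : Finset ℕ) :
    ∀ (hs : ∀ j ∈ s, 2 ≤ j ∧ j ≤ N) (m : ℕ) (c₀ : ℝ) (c : ℕ → ℝ),
    ∑ k ∈ Finset.range (2^N), (c₀ + ∑ j ∈ s, c j * nu N k j)^(2*m)
      ≤ dfac m * 2^N * (c₀^2 + ∑ j ∈ s, (c j)^2)^m := by
  classical
  induction s using Finset.induction_on with
  | empty =>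
    intro _ m c₀ c
    simp only [Finset.sum_empty, add_zero, Finset.sum_const, Finset.card_range, nsmul_eq_mul]
    rw [pow_mul]
    have h1 : (1:ℝ) ≤ (dfac m : ℝ) := by exact_mod_cast one_le_dfac m
    have h2 : (0:ℝ) ≤ (c₀^2)^m := by positivity
    push_cast
    have h4 : (2:ℝ)^N * (c₀^2)^m ≤ (dfac m : ℝ) * ((2:ℝ)^N * (c₀^2)^m) :=
      le_mul_of_one_le_left (by positivity) h1
    linarith [h4]
  | @insert j₀ s' hj₀ ih =>
    intro hs m c₀ c
    have hj₀N : 2 ≤ j₀ ∧ j₀ ≤ N := hs j₀ (Finset.mem_insert_self _ _)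
    have hs' : ∀ j ∈ s', 2 ≤ j ∧ j ≤ N := fun j hj => hs j (Finset.mem_insert_of_mem hj)
    set b := N - (j₀ - 1) with hb_def
    have hbN : b < N := by omega
    set Y : ℕ → ℝ := fun k => c₀ + ∑ j ∈ s', c j * nu N k j with hY
    set χ : ℕ → ℝ := fun k => nu N k j₀ with hχ
    have hYflip : ∀ k, Y (k ^^^ 2^b) = Y k := by
      intro k
      simp only [hY]
      congr 1
      apply Finset.sum_congr rfl
      intro j hj
      have hjc := hs' j hj
      have hne : N - (j-1) ≠ b := by
        have : j ≠ j₀ := fun h => hj₀ (h ▸ hj)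
        omega
      rw [nu_xor_ne N k j b hne]
    have hχflip : ∀ k, χ (k ^^^ 2^b) = - χ k := fun k => nu_xor_eq N k j₀ b rfl
    -- expand
    have expand : ∀ k, (c₀ + ∑ j ∈ insert j₀ s', c j * nu N k j)^(2*m)
        = ∑ r ∈ Finset.range (2*m+1),
            Y k ^ r * (c j₀ * χ k)^(2*m - r) * ((2*m).choose r) := by
      intro k
      rw [Finset.sum_insert hj₀]
      have : c₀ + (c j₀ * nu N k j₀ + ∑ j ∈ s', c j * nu N k j)
          = Y k + c j₀ * χ k := by simp only [hY, hχ]; ring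
      rw [this, add_pow]
    calc ∑ k ∈ Finset.range (2^N), (c₀ + ∑ j ∈ insert j₀ s', c j * nu N k j)^(2*m)
        = ∑ k ∈ Finset.range (2^N), ∑ r ∈ Finset.range (2*m+1),
            Y k ^ r * (c j₀ * χ k)^(2*m - r) * ((2*m).choose r) := by
          exact Finset.sum_congr rfl fun k _ => expand k
      _ = ∑ r ∈ Finset.range (2*m+1), ∑ k ∈ Finset.range (2^N),
            Y k ^ r * (c j₀ * χ k)^(2*m - r) * ((2*m).choose r) := Finset.sum_comm
      _ = ∑ u ∈ Finset.range (m+1), ∑ k ∈ Finset.range (2^N),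
            Y k ^ (2*u) * (c j₀ * χ k)^(2*m - 2*u) * ((2*m).choose (2*u)) := by
          apply sum_even_range
          intro r hr hrle
          apply sum_flip_vanish N b hbN
          intro k
          have hodd : Odd (2*m - r) := by
            rcases hr with ⟨v, hv⟩
            exact ⟨m - v - 1, by omega⟩
          rw [hYflip k, mul_pow, mul_pow, hχflip k, hodd.neg_pow]
          ring
      _ ≤ ∑ u ∈ Finset.range (m+1), ((dfac m * (m.choose u) : ℕ) : ℝ) * 2^N *
            ((c₀^2 + ∑ j ∈ s', (c j)^2)^u * ((c j₀)^2)^(m-u)) := by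
          apply Finset.sum_le_sum
          intro u hu
          have hum : u ≤ m := by
            simp only [Finset.mem_range] at hu; omega
          have h2 : 2*m - 2*u = 2*(m-u) := by omega
          have hterm : ∀ k, Y k ^ (2*u) * (c j₀ * χ k)^(2*m - 2*u) * (((2*m).choose (2*u) : ℕ) : ℝ)
              = (((2*m).choose (2*u) : ℕ) : ℝ) * ((c j₀)^2)^(m-u) * Y k ^ (2*u) := by
            intro k
            have hχsq : χ k ^ 2 = 1 := nu_sq N k j₀
            rw [h2, mul_pow, pow_mul (c j₀) 2, pow_mul (χ k) 2, hχsq, one_pow, mul_one]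
            ring
          calc ∑ k ∈ Finset.range (2^N),
                Y k ^ (2*u) * (c j₀ * χ k)^(2*m - 2*u) * (((2*m).choose (2*u) : ℕ) : ℝ)
              = (((2*m).choose (2*u) : ℕ) : ℝ) * ((c j₀)^2)^(m-u) *
                  ∑ k ∈ Finset.range (2^N), Y k ^ (2*u) := by
                rw [Finset.mul_sum]
                exact Finset.sum_congr rfl fun k _ => hterm k
            _ ≤ (((2*m).choose (2*u) : ℕ) : ℝ) * ((c j₀)^2)^(m-u) *
                  ((dfac u : ℝ) * 2^N * (c₀^2 + ∑ j ∈ s', (c j)^2)^u) := by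
                apply mul_le_mul_of_nonneg_left _ (by positivity)
                exact ih hs' u c₀ c
            _ = (((2*m).choose (2*u) : ℕ) : ℝ) * (dfac u : ℝ) *
                  (2^N * ((c₀^2 + ∑ j ∈ s', (c j)^2)^u * ((c j₀)^2)^(m-u))) := by ring
            _ ≤ ((dfac m * (m.choose u) : ℕ) : ℝ) *
                  (2^N * ((c₀^2 + ∑ j ∈ s', (c j)^2)^u * ((c j₀)^2)^(m-u))) := by
                apply mul_le_mul_of_nonneg_right _ (by positivity)
                have := choose_dfac_le u m hum
                push_cast at this ⊢
                linarith
            _ = ((dfac m * (m.choose u) : ℕ) : ℝ) * 2^N *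
                  ((c₀^2 + ∑ j ∈ s', (c j)^2)^u * ((c j₀)^2)^(m-u)) := by ring
      _ = dfac m * 2^N * (c₀^2 + ∑ j ∈ insert j₀ s', (c j)^2)^m := by
          rw [Finset.sum_insert hj₀]
          have harr : c₀ ^ 2 + ((c j₀)^2 + ∑ j ∈ s', (c j)^2)
              = (c₀^2 + ∑ j ∈ s', (c j)^2) + (c j₀)^2 := by ring
          rw [harr, add_pow, Finset.mul_sum]
          apply Finset.sum_congr rfl
          intro u _
          push_cast
          ring
lemma khintchine_nu (N m : ℕ) (hm : 1 ≤ m) (c : ℕ → ℝ) :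
    ∑ k ∈ Finset.range (2^N), (∑ j ∈ Finset.Icc 1 N, c j * nu N k j)^(2*m)
      ≤ dfac m * 2^N * (∑ j ∈ Finset.Icc 1 N, (c j)^2)^m := by
  rcases Nat.eq_zero_or_pos N with hN | hN
  · subst hN
    have h2m : 2*m ≠ 0 := by omega
    have hm0 : m ≠ 0 := by omega
    simp [Finset.Icc_eq_empty (show ¬ (1:ℕ) ≤ 0 by omega), zero_pow h2m, zero_pow hm0]
  · have h1 : (1:ℕ) ∉ Finset.Icc 2 N := by simp
    have hIcc : Finset.Icc 1 N = insert 1 (Finset.Icc 2 N) := by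
      ext j; simp only [Finset.mem_Icc, Finset.mem_insert]; omega
    rw [hIcc, Finset.sum_insert h1]
    have key := khintchine_aux N (Finset.Icc 2 N)
      (fun j hj => by simp only [Finset.mem_Icc] at hj; omega) m (c 1) c
    calc ∑ k ∈ Finset.range (2^N),
          (∑ j ∈ insert 1 (Finset.Icc 2 N), c j * nu N k j)^(2*m)
        = ∑ k ∈ Finset.range (2^N),
          (c 1 + ∑ j ∈ Finset.Icc 2 N, c j * nu N k j)^(2*m) := by
          apply Finset.sum_congr rfl
          intro k hk
          rw [Finset.sum_insert h1, nu_one N k (Finset.mem_range.1 hk) 1 le_rfl, mul_one]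
      _ ≤ dfac m * 2^N * ((c 1)^2 + ∑ j ∈ Finset.Icc 2 N, (c j)^2)^m := key

lemma Lp_sum_le (K : Finset ℕ) (p : ℝ) (hp : 1 ≤ p) (s : Finset ℕ) :
    ∀ (f : ℕ → ℕ → ℝ), (∀ j ∈ s, ∀ k ∈ K, 0 ≤ f j k) →
    (∑ k ∈ K, (∑ j ∈ s, f j k) ^ p) ^ (1/p) ≤ ∑ j ∈ s, (∑ k ∈ K, (f j k) ^ p) ^ (1/p) := by
  have hp0 : p ≠ 0 := by positivity
  classical
  induction s using Finset.induction_on with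
  | empty =>
    intro f _
    have hip : p⁻¹ ≠ 0 := by positivity
    simp [Real.zero_rpow hp0, Real.zero_rpow hip]
  | @insert j₀ s' hj₀ ih =>
    intro f hf
    have hf' : ∀ j ∈ s', ∀ k ∈ K, 0 ≤ f j k :=
      fun j hj k hk => hf j (Finset.mem_insert_of_mem hj) k hk
    have step : (∑ k ∈ K, (f j₀ k + ∑ j ∈ s', f j k) ^ p) ^ (1/p)
        ≤ (∑ k ∈ K, (f j₀ k) ^ p) ^ (1/p) + (∑ k ∈ K, (∑ j ∈ s', f j k) ^ p) ^ (1/p) := by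
      apply Real.Lp_add_le_of_nonneg K hp
      · exact fun k hk => hf j₀ (Finset.mem_insert_self _ _) k hk
      · exact fun k hk => Finset.sum_nonneg fun j hj => hf' j hj k hk
    calc (∑ k ∈ K, (∑ j ∈ insert j₀ s', f j k) ^ p) ^ (1/p)
        = (∑ k ∈ K, (f j₀ k + ∑ j ∈ s', f j k) ^ p) ^ (1/p) := by
          congr 1; exact Finset.sum_congr rfl fun k _ => by rw [Finset.sum_insert hj₀]
      _ ≤ (∑ k ∈ K, (f j₀ k) ^ p) ^ (1/p) + (∑ k ∈ K, (∑ j ∈ s', f j k) ^ p) ^ (1/p) := step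
      _ ≤ (∑ k ∈ K, (f j₀ k) ^ p) ^ (1/p) + ∑ j ∈ s', (∑ k ∈ K, (f j k) ^ p) ^ (1/p) := by
          exact add_le_add_right (ih f hf') _
      _ = ∑ j ∈ insert j₀ s', (∑ k ∈ K, (f j k) ^ p) ^ (1/p) := by
          rw [Finset.sum_insert hj₀]

lemma mink_power (K : Finset ℕ) (s : Finset ℕ) (g : ℕ → ℕ → ℝ) (m : ℕ) (hm : 1 ≤ m)
    (hg : ∀ j ∈ s, ∀ k ∈ K, 0 ≤ g j k) (D : ℝ) (hD : 0 ≤ D) (B : ℕ → ℝ)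
    (hB : ∀ j ∈ s, 0 ≤ B j) (h : ∀ j ∈ s, ∑ k ∈ K, (g j k)^m ≤ D * (B j)^m) :
    ∑ k ∈ K, (∑ j ∈ s, g j k)^m ≤ D * (∑ j ∈ s, B j)^m := by
  set p : ℝ := (m : ℝ) with hp_def
  have hp1 : (1:ℝ) ≤ p := by rw [hp_def]; exact_mod_cast hm
  have hp0 : p ≠ 0 := by positivity
  have hrw : ∀ (x : ℝ), 0 ≤ x → x ^ p = x ^ m := fun x hx => Real.rpow_natCast x m
  have key := Lp_sum_le K p hp1 s g hg
  -- bound each summand on the RHS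
  have hbd : ∀ j ∈ s, (∑ k ∈ K, (g j k) ^ p) ^ (1/p) ≤ D ^ (1/p) * B j := by
    intro j hj
    have h1 : ∑ k ∈ K, (g j k) ^ p = ∑ k ∈ K, (g j k) ^ m :=
      Finset.sum_congr rfl fun k hk => hrw _ (hg j hj k hk)
    have h2 : (∑ k ∈ K, (g j k) ^ p) ≤ D * (B j) ^ p := by
      rw [h1, hrw _ (hB j hj)]; exact h j hj
    have h3 : (∑ k ∈ K, (g j k) ^ p) ^ (1/p) ≤ (D * (B j) ^ p) ^ (1/p) := by
      apply Real.rpow_le_rpow _ h2 (by positivity)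
      exact Finset.sum_nonneg fun k hk => Real.rpow_nonneg (hg j hj k hk) p
    calc (∑ k ∈ K, (g j k) ^ p) ^ (1/p) ≤ (D * (B j) ^ p) ^ (1/p) := h3
      _ = D ^ (1/p) * ((B j) ^ p) ^ (1/p) := Real.mul_rpow hD (Real.rpow_nonneg (hB j hj) p)
      _ = D ^ (1/p) * B j := by
          rw [← Real.rpow_mul (hB j hj), mul_one_div, div_self hp0, Real.rpow_one]
  have key2 : (∑ k ∈ K, (∑ j ∈ s, g j k) ^ p) ^ (1/p) ≤ D ^ (1/p) * ∑ j ∈ s, B j := by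
    rw [Finset.mul_sum]
    exact key.trans (Finset.sum_le_sum hbd)
  -- undo the rpow
  have hX : (0:ℝ) ≤ ∑ k ∈ K, (∑ j ∈ s, g j k) ^ p :=
    Finset.sum_nonneg fun k hk =>
      Real.rpow_nonneg (Finset.sum_nonneg fun j hj => hg j hj k hk) p
  have hXm : ∑ k ∈ K, (∑ j ∈ s, g j k) ^ p = ∑ k ∈ K, (∑ j ∈ s, g j k) ^ m :=
    Finset.sum_congr rfl fun k hk => hrw _ (Finset.sum_nonneg fun j hj => hg j hj k hk)
  have hfinal : ∑ k ∈ K, (∑ j ∈ s, g j k) ^ p ≤ (D ^ (1/p) * ∑ j ∈ s, B j) ^ p := by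
    calc ∑ k ∈ K, (∑ j ∈ s, g j k) ^ p
        = ((∑ k ∈ K, (∑ j ∈ s, g j k) ^ p) ^ (1/p)) ^ p := by
          rw [← Real.rpow_mul hX, one_div_mul_cancel hp0, Real.rpow_one]
      _ ≤ (D ^ (1/p) * ∑ j ∈ s, B j) ^ p := by
          apply Real.rpow_le_rpow (Real.rpow_nonneg hX _) key2 (by positivity)
  have hBs : (0:ℝ) ≤ ∑ j ∈ s, B j := Finset.sum_nonneg hB
  calc ∑ k ∈ K, (∑ j ∈ s, g j k) ^ m
      = ∑ k ∈ K, (∑ j ∈ s, g j k) ^ p := hXm.symm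
    _ ≤ (D ^ (1/p) * ∑ j ∈ s, B j) ^ p := hfinal
    _ = (D ^ (1/p)) ^ p * (∑ j ∈ s, B j) ^ p :=
        Real.mul_rpow (Real.rpow_nonneg hD _) hBs
    _ = D * (∑ j ∈ s, B j) ^ m := by
        rw [← Real.rpow_mul hD, one_div_mul_cancel hp0, Real.rpow_one, hrw _ hBs]
lemma rad_on_dyadic (N k i : ℕ) (hk : k < 2^N) (hi : i ≤ N) (t : ℝ)
    (ht : t ∈ Set.Ioo ((k:ℝ)/2^N) (((k:ℝ)+1)/2^N)) : rad i t = nu N k i := by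
  set e : ℕ := i - 1 with he_def
  set d : ℕ := N - (i - 1) with hd_def
  have hed : e + d = N := by omega
  have h2N : ((2:ℝ))^N = 2^e * 2^d := by rw [← pow_add, hed]
  have h2e : (0:ℝ) < 2^e := by positivity
  have h2d : (0:ℝ) < 2^d := by positivity
  set Q : ℕ := k / 2^d with hQ_def
  have hQle : (Q:ℝ) * 2^d ≤ k := by exact_mod_cast Nat.div_mul_le_self k (2^d)
  have hQlt : (k:ℝ) + 1 ≤ 2^d * (Q+1) := by
    have := Nat.lt_mul_div_succ k (show 0 < 2^d by positivity)
    exact_mod_cast Nat.succ_le_of_lt this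
  set u : ℝ := 2^e * t with hu_def
  have hdiv1 : (2:ℝ)^e * ((k:ℝ)/2^N) = (k:ℝ)/2^d := by
    rw [h2N]; field_simp
  have hdiv2 : (2:ℝ)^e * (((k:ℝ)+1)/2^N) = ((k:ℝ)+1)/2^d := by
    rw [h2N]; field_simp
  have hu1 : (Q:ℝ) < u := by
    have h1 : (2:ℝ)^e * ((k:ℝ)/2^N) < 2^e * t := by
      exact mul_lt_mul_of_pos_left ht.1 h2e
    rw [hdiv1] at h1
    have h2 : (Q:ℝ) ≤ (k:ℝ)/2^d := (le_div_iff₀ h2d).2 hQle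
    linarith
  have hu2 : u < (Q:ℝ) + 1 := by
    have h1 : (2:ℝ)^e * t < 2^e * (((k:ℝ)+1)/2^N) := by
      exact mul_lt_mul_of_pos_left ht.2 h2e
    rw [hdiv2] at h1
    have h2 : ((k:ℝ)+1)/2^d ≤ (Q:ℝ) + 1 := by
      rw [div_le_iff₀ h2d]; linarith
    linarith
  have harg : (2:ℝ)^e * Real.pi * t = Real.pi * (u - Q) + Q * Real.pi := by
    rw [hu_def]; ring
  have hrad : rad i t = Real.sign (Real.sin ((2:ℝ)^e * Real.pi * t)) := rfl
  have hspos : 0 < Real.sin (Real.pi * (u - Q)) := by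
    apply Real.sin_pos_of_pos_of_lt_pi
    · have := Real.pi_pos; nlinarith
    · have := Real.pi_pos; nlinarith
  have hnu : nu N k i = (-1:ℝ)^Q := rfl
  rw [hrad, harg, Real.sin_add_nat_mul_pi, hnu]
  rcases Nat.even_or_odd Q with hQ | hQ
  · rw [hQ.neg_one_pow, one_mul]
    exact Real.sign_of_pos hspos
  · rw [hQ.neg_one_pow, neg_one_mul]
    exact Real.sign_of_neg (by linarith)

lemma transfer (N : ℕ) (G : (ℕ → ℝ) → ℝ) :
    (∫ t in Set.Icc (0:ℝ) 1, G (fun i => if i ≤ N then rad i t else 0))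
      = ((2:ℝ)^N)⁻¹ * ∑ k ∈ Finset.range (2^N),
          G (fun i => if i ≤ N then nu N k i else 0) := by
  have h2N : (0:ℝ) < (2:ℝ)^N := by positivity
  set μ : MeasureTheory.Measure ℝ := volume.restrict (Set.Icc (0:ℝ) 1) with hμ
  set Bad : Set ℝ := ⋃ k ∈ Finset.range (2^N+1), {((k:ℝ)/2^N)} with hBad
  have hBadc : Bad.Countable :=
    Set.Countable.biUnion (Finset.countable_toSet _) (fun k _ => Set.countable_singleton _)
  have hBadnull : volume Bad = 0 := hBadc.measure_zero _
  have hae : (fun t => G (fun i => if i ≤ N then rad i t else 0)) =ᵐ[μ]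
      (fun t => ∑ k ∈ Finset.range (2^N),
        Set.indicator (Set.Ioo ((k:ℝ)/2^N) (((k:ℝ)+1)/2^N))
          (fun _ => G (fun i => if i ≤ N then nu N k i else 0)) t) := by
    have h1 : ∀ᵐ t ∂μ, t ∈ Set.Icc (0:ℝ) 1 :=
      MeasureTheory.ae_restrict_mem measurableSet_Icc
    have h2 : ∀ᵐ t ∂μ, t ∉ Bad := by
      apply MeasureTheory.ae_restrict_of_ae
      rw [MeasureTheory.ae_iff]
      convert hBadnull using 2
      ext t; simp
    filter_upwards [h1, h2] with t htI htB
    -- identify the dyadic interval containing t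
    have ht0 : 0 < t := by
      rcases lt_or_eq_of_le htI.1 with h | h
      · exact h
      · exfalso; apply htB; rw [hBad]
        simp only [Set.mem_iUnion, Set.mem_singleton_iff, Finset.mem_range]
        exact ⟨0, Nat.succ_pos _, by simp [← h]⟩
    have ht1 : t < 1 := by
      rcases lt_or_eq_of_le htI.2 with h | h
      · exact h
      · exfalso; apply htB; rw [hBad]
        simp only [Set.mem_iUnion, Set.mem_singleton_iff, Finset.mem_range]
        refine ⟨2^N, Nat.lt_succ_self _, ?_⟩
        have hc : ((2^N : ℕ):ℝ) = (2:ℝ)^N := by push_cast; ring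
        rw [hc, div_self (ne_of_gt h2N)]
        exact h
    set k₀ : ℕ := ⌊t * 2^N⌋₊ with hk₀
    have htn : 0 ≤ t * 2^N := by positivity
    have hk₀lt : k₀ < 2^N := by
      rw [hk₀]
      apply Nat.floor_lt htn |>.2
      have : t * 2^N < 1 * 2^N := by
        apply mul_lt_mul_of_pos_right ht1 h2N
      push_cast
      linarith
    have hne : (k₀:ℝ) ≠ t * 2^N := by
      intro hcon
      apply htB; rw [hBad]
      simp only [Set.mem_iUnion, Set.mem_singleton_iff, Finset.mem_range]
      refine ⟨k₀, by omega, ?_⟩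
      rw [eq_div_iff (ne_of_gt h2N)]
      linarith [hcon]
    have hmemIoo : t ∈ Set.Ioo ((k₀:ℝ)/2^N) (((k₀:ℝ)+1)/2^N) := by
      constructor
      · rw [div_lt_iff₀ h2N]
        have hle2 : (k₀:ℝ) ≤ t * 2^N := Nat.floor_le htn
        have : (k₀:ℝ) < t * 2^N := lt_of_le_of_ne hle2 hne
        linarith
      · rw [lt_div_iff₀ h2N]
        have := Nat.lt_floor_add_one (t * 2^N)
        push_cast at this ⊢
        linarith
    have hval : (∑ k ∈ Finset.range (2^N),
        Set.indicator (Set.Ioo ((k:ℝ)/2^N) (((k:ℝ)+1)/2^N))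
          (fun _ => G (fun i => if i ≤ N then nu N k i else 0)) t)
        = G (fun i => if i ≤ N then nu N k₀ i else 0) := by
      rw [Finset.sum_eq_single_of_mem k₀ (Finset.mem_range.2 hk₀lt)]
      · rw [Set.indicator_of_mem hmemIoo]
      · intro k' hk' hkne
        apply Set.indicator_of_notMem
        intro hcon
        apply hkne
        have hle : (k':ℝ) < t * 2^N := by
          have := hcon.1; rw [div_lt_iff₀ h2N] at this; linarith
        have hlt : t * 2^N < (k':ℝ) + 1 := by
          have := hcon.2; rw [lt_div_iff₀ h2N] at this; linarith
        have h1 : k' ≤ k₀ := Nat.le_floor hle.le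
        have h2 : k₀ < k' + 1 := by
          rw [hk₀]; apply (Nat.floor_lt htn).2; push_cast; linarith
        omega
    rw [hval]
    congr 1
    funext i
    by_cases hiN : i ≤ N
    · rw [if_pos hiN, if_pos hiN]
      exact rad_on_dyadic N k₀ i hk₀lt hiN t hmemIoo
    · rw [if_neg hiN, if_neg hiN]
  rw [MeasureTheory.integral_congr_ae hae]
  have hIoosub : ∀ k ∈ Finset.range (2^N),
      Set.Ioo ((k:ℝ)/2^N) (((k:ℝ)+1)/2^N) ⊆ Set.Icc (0:ℝ) 1 := by
    intro k hk
    simp only [Finset.mem_range] at hk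
    intro x hx
    constructor
    · have : (0:ℝ) ≤ (k:ℝ)/2^N := by positivity
      linarith [hx.1]
    · have hkR : (k:ℝ) + 1 ≤ (2:ℝ)^N := by exact_mod_cast Nat.succ_le_of_lt hk
      have : ((k:ℝ)+1)/2^N ≤ 1 := by rw [div_le_one h2N]; linarith
      linarith [hx.2]
  have hμIoo : ∀ k ∈ Finset.range (2^N),
      μ (Set.Ioo ((k:ℝ)/2^N) (((k:ℝ)+1)/2^N)) = ENNReal.ofReal (((2:ℝ)^N)⁻¹) := by
    intro k hk
    rw [hμ, MeasureTheory.Measure.restrict_apply measurableSet_Ioo,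
      Set.inter_eq_left.2 (hIoosub k hk), Real.volume_Ioo]
    congr 1
    field_simp; ring
  rw [MeasureTheory.integral_finset_sum]
  · rw [Finset.mul_sum]
    apply Finset.sum_congr rfl
    intro k hk
    rw [MeasureTheory.integral_indicator_const _ measurableSet_Ioo, MeasureTheory.measureReal_def, hμIoo k hk,
      ENNReal.toReal_ofReal (by positivity), smul_eq_mul]
  · intro k hk
    apply (MeasureTheory.integrable_indicator_iff measurableSet_Ioo).2
    refine MeasureTheory.integrableOn_const (ne_of_lt ?_)
    calc μ (Set.Ioo ((k:ℝ)/2^N) (((k:ℝ)+1)/2^N)) = ENNReal.ofReal (((2:ℝ)^N)⁻¹) := hμIoo k hk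
      _ < ⊤ := ENNReal.ofReal_lt_top
lemma dfac_le_aux : ∀ m : ℕ, 2 ≤ m → (dfac m : ℝ) ≤ (2*(m:ℝ) - 2)^m := by
  intro m hm
  induction m, hm using Nat.le_induction with
  | base =>
    have : dfac 2 = 3 := by simp [dfac, Finset.prod_range_succ]
    rw [this]
    norm_num
  | succ m hm ih =>
    have hm1 : (1:ℝ) ≤ (m:ℝ) - 1 := by
      have : (2:ℝ) ≤ (m:ℝ) := by exact_mod_cast hm
      linarith
    have hmpos : (0:ℝ) < (m:ℝ) - 1 := by linarith
    have hber : (2:ℝ) ≤ (1 + 1/((m:ℝ)-1))^m := by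
      have ha0 : (0:ℝ) ≤ 1/((m:ℝ)-1) := one_div_nonneg.2 hmpos.le
      have ha : (-2:ℝ) ≤ 1/((m:ℝ)-1) := by linarith
      have h1 := one_add_mul_le_pow ha m
      have h2 : (1:ℝ) ≤ (m:ℝ) * (1/((m:ℝ)-1)) := by
        rw [mul_one_div, le_div_iff₀ hmpos]
        linarith
      linarith
    have hfact : (1 + 1/((m:ℝ)-1)) * (2*(m:ℝ) - 2) = 2*(m:ℝ) := by
      field_simp
      ring
    have hpow : (2*(m:ℝ))^m = (1 + 1/((m:ℝ)-1))^m * (2*(m:ℝ) - 2)^m := by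
      rw [← mul_pow, hfact]
    have hbase : (0:ℝ) ≤ (2*(m:ℝ) - 2)^m := pow_nonneg (by linarith) m
    have hkey : (2*(m:ℝ) - 2)^m * (2*(m:ℝ)+1) ≤ (2*(m:ℝ))^(m+1) := by
      have h1 : (2:ℝ) * (2*(m:ℝ)-2)^m ≤ (2*(m:ℝ))^m := by
        rw [hpow]
        exact mul_le_mul_of_nonneg_right hber hbase
      have h2 : (0:ℝ) < 2*(m:ℝ) := by linarith
      calc (2*(m:ℝ) - 2)^m * (2*(m:ℝ)+1)
          ≤ (2*(m:ℝ) - 2)^m * (2 * (2*(m:ℝ))) := by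
            apply mul_le_mul_of_nonneg_left _ hbase
            linarith
        _ = (2 * (2*(m:ℝ)-2)^m) * (2*(m:ℝ)) := by ring
        _ ≤ (2*(m:ℝ))^m * (2*(m:ℝ)) := mul_le_mul_of_nonneg_right h1 h2.le
        _ = (2*(m:ℝ))^(m+1) := by ring
    have hdf : (dfac (m+1) : ℝ) = (dfac m : ℝ) * (2*(m:ℝ)+1) := by
      rw [dfac_succ]
      push_cast
      ring

    rw [hdf]
    push_cast
    calc (dfac m : ℝ) * (2*(m:ℝ)+1) ≤ (2*(m:ℝ)-2)^m * (2*(m:ℝ)+1) := by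
          apply mul_le_mul_of_nonneg_right ih
          linarith
      _ ≤ (2*(m:ℝ))^(m+1) := hkey
      _ = (2*((m:ℝ)+1) - 2)^(m+1) := by ring_nf

lemma dfac_le_qpow (m : ℕ) (hm : 1 ≤ m) (q : ℝ) (hq : 1 ≤ q) (h : 2*(m:ℝ) - 2 < q) :
    (dfac m : ℝ) ≤ q^m := by
  rcases eq_or_lt_of_le hm with hm1 | hm2
  · have : dfac 1 = 1 := by simp [dfac, Finset.prod_range_succ]
    rw [← hm1, this]
    simpa using hq
  · have hm2' : 2 ≤ m := hm2
    calc (dfac m : ℝ) ≤ (2*(m:ℝ) - 2)^m := dfac_le_aux m hm2'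
      _ ≤ q^m := by
        apply pow_le_pow_left₀ _ h.le
        have : (2:ℝ) ≤ (m:ℝ) := by exact_mod_cast hm2'
        linarith
theorem double_rademacher_Lq_bound (N : ℕ) (a : ℕ → ℕ → ℝ) (q : ℝ) (hq : 1 ≤ q) :
    (∫ s in Set.Icc (0:ℝ) 1, ∫ t in Set.Icc (0:ℝ) 1,
        |∑ i ∈ Finset.Icc 1 N, ∑ j ∈ Finset.Icc 1 N, a i j * rad i s * rad j t| ^ q) ^ (1/q)
      ≤ q * Real.sqrt (∑ i ∈ Finset.Icc 1 N, ∑ j ∈ Finset.Icc 1 N, (a i j) ^ 2) := by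
  classical
  have hq0 : 0 < q := by linarith
  set I : Finset ℕ := Finset.Icc 1 N with hI
  set K : Finset ℕ := Finset.range (2^N) with hK
  have h2N : (0:ℝ) < (2:ℝ)^N := by positivity
  have hcard : ((2^N : ℕ) : ℝ) = (2:ℝ)^N := by push_cast; ring
  set X : ℕ → ℕ → ℝ := fun k l => ∑ i ∈ I, ∑ j ∈ I, a i j * nu N k i * nu N l j with hX
  set S2 : ℝ := ∑ i ∈ I, ∑ j ∈ I, (a i j)^2 with hS2
  have hS2nn : 0 ≤ S2 :=
    Finset.sum_nonneg fun i _ => Finset.sum_nonneg fun j _ => sq_nonneg _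
  set m : ℕ := ⌈q/2⌉₊ with hm
  have hm1 : 1 ≤ m := Nat.one_le_iff_ne_zero.2 (by
    have : 0 < m := Nat.ceil_pos.2 (by linarith)
    omega)
  have hmR : (1:ℝ) ≤ (m:ℝ) := by exact_mod_cast hm1
  have hq2m : q ≤ 2*(m:ℝ) := by
    have h := Nat.le_ceil (q/2)
    rw [← hm] at h
    linarith
  have h2m2 : 2*(m:ℝ) - 2 < q := by
    have h := Nat.ceil_lt_add_one (show (0:ℝ) ≤ q/2 by positivity)
    rw [← hm] at h
    linarith
  -- Step 1: turn the double integral into a double finite average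
  have hinner : ∀ s : ℝ, (∫ t in Set.Icc (0:ℝ) 1,
        |∑ i ∈ I, ∑ j ∈ I, a i j * rad i s * rad j t| ^ q)
      = ((2:ℝ)^N)⁻¹ * ∑ l ∈ K, |∑ i ∈ I, ∑ j ∈ I, a i j * rad i s * nu N l j| ^ q := by
    intro s
    have h := transfer N (fun v => |∑ i ∈ I, ∑ j ∈ I, a i j * rad i s * v j| ^ q)
    simp only at h
    have e1 : ∀ (w : ℕ → ℝ),
        (∑ i ∈ I, ∑ j ∈ I, a i j * rad i s * (if j ≤ N then w j else 0))
          = ∑ i ∈ I, ∑ j ∈ I, a i j * rad i s * w j := by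
      intro w
      refine Finset.sum_congr rfl fun i _ => Finset.sum_congr rfl fun j hj => ?_
      rw [if_pos (Finset.mem_Icc.1 hj).2]
    calc (∫ t in Set.Icc (0:ℝ) 1, |∑ i ∈ I, ∑ j ∈ I, a i j * rad i s * rad j t| ^ q)
        = (∫ t in Set.Icc (0:ℝ) 1,
            |∑ i ∈ I, ∑ j ∈ I, a i j * rad i s * (if j ≤ N then rad j t else 0)| ^ q) := by
          apply MeasureTheory.integral_congr_ae
          apply Filter.EventuallyEq.of_eq
          funext t
          rw [e1]
      _ = ((2:ℝ)^N)⁻¹ * ∑ l ∈ K, |∑ i ∈ I, ∑ j ∈ I,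
            a i j * rad i s * (if j ≤ N then nu N l j else 0)| ^ q := h
      _ = ((2:ℝ)^N)⁻¹ * ∑ l ∈ K, |∑ i ∈ I, ∑ j ∈ I, a i j * rad i s * nu N l j| ^ q := by
          congr 1
          exact Finset.sum_congr rfl fun l _ => by rw [e1]
  have hout : (∫ s in Set.Icc (0:ℝ) 1, ∫ t in Set.Icc (0:ℝ) 1,
        |∑ i ∈ I, ∑ j ∈ I, a i j * rad i s * rad j t| ^ q)
      = ((2:ℝ)^N)⁻¹ * ∑ k ∈ K, (((2:ℝ)^N)⁻¹ * ∑ l ∈ K, |X k l| ^ q) := by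
    have h := transfer N (fun v =>
      ((2:ℝ)^N)⁻¹ * ∑ l ∈ K, |∑ i ∈ I, ∑ j ∈ I, a i j * v i * nu N l j| ^ q)
    simp only at h
    have e2 : ∀ (w : ℕ → ℝ) (l : ℕ),
        (∑ i ∈ I, ∑ j ∈ I, a i j * (if i ≤ N then w i else 0) * nu N l j)
          = ∑ i ∈ I, ∑ j ∈ I, a i j * w i * nu N l j := by
      intro w l
      refine Finset.sum_congr rfl fun i hi => Finset.sum_congr rfl fun j _ => ?_
      rw [if_pos (Finset.mem_Icc.1 hi).2]
    calc (∫ s in Set.Icc (0:ℝ) 1, ∫ t in Set.Icc (0:ℝ) 1,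
          |∑ i ∈ I, ∑ j ∈ I, a i j * rad i s * rad j t| ^ q)
        = (∫ s in Set.Icc (0:ℝ) 1, ((2:ℝ)^N)⁻¹ * ∑ l ∈ K, |∑ i ∈ I, ∑ j ∈ I,
            a i j * (if i ≤ N then rad i s else 0) * nu N l j| ^ q) := by
          apply MeasureTheory.integral_congr_ae
          apply Filter.EventuallyEq.of_eq
          funext s
          rw [hinner s]
          congr 1
          exact Finset.sum_congr rfl fun l _ => by rw [e2]
      _ = ((2:ℝ)^N)⁻¹ * ∑ k ∈ K, (((2:ℝ)^N)⁻¹ * ∑ l ∈ K, |∑ i ∈ I, ∑ j ∈ I,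
            a i j * (if i ≤ N then nu N k i else 0) * nu N l j| ^ q) := h
      _ = ((2:ℝ)^N)⁻¹ * ∑ k ∈ K, (((2:ℝ)^N)⁻¹ * ∑ l ∈ K, |X k l| ^ q) := by
          congr 1
          refine Finset.sum_congr rfl fun k _ => ?_
          congr 1
          exact Finset.sum_congr rfl fun l _ => by rw [e2]
  -- Step 2: discrete moment bound
  have hmom : ∑ k ∈ K, ∑ l ∈ K, (X k l)^(2*m)
      ≤ ((dfac m : ℝ) * (2:ℝ)^N)^2 * S2^m := by
    have hXrow : ∀ k l, X k l = ∑ j ∈ I, (∑ i ∈ I, a i j * nu N k i) * nu N l j := by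
      intro k l
      rw [hX]
      simp only
      rw [Finset.sum_comm]
      exact Finset.sum_congr rfl fun j _ => by rw [Finset.sum_mul]
    have hinnerK : ∀ k, ∑ l ∈ K, (X k l)^(2*m)
        ≤ (dfac m : ℝ) * 2^N * (∑ j ∈ I, (∑ i ∈ I, a i j * nu N k i)^2)^m := by
      intro k
      have h := khintchine_nu N m hm1 (fun j => ∑ i ∈ I, a i j * nu N k i)
      calc ∑ l ∈ K, (X k l)^(2*m)
          = ∑ l ∈ K, (∑ j ∈ I, (∑ i ∈ I, a i j * nu N k i) * nu N l j)^(2*m) := by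
            exact Finset.sum_congr rfl fun l _ => by rw [hXrow]
        _ ≤ (dfac m : ℝ) * 2^N * (∑ j ∈ I, (∑ i ∈ I, a i j * nu N k i)^2)^m := by
            exact_mod_cast h
    have hminkapp : ∑ k ∈ K, (∑ j ∈ I, (∑ i ∈ I, a i j * nu N k i)^2)^m
        ≤ ((dfac m : ℝ) * 2^N) * S2^m := by
      have hrw : S2 = ∑ j ∈ I, ∑ i ∈ I, (a i j)^2 := Finset.sum_comm
      rw [hrw]
      apply mink_power K I (fun j k => (∑ i ∈ I, a i j * nu N k i)^2) m hm1
        (fun j _ k _ => sq_nonneg _) _ (by positivity) (fun j => ∑ i ∈ I, (a i j)^2)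
        (fun j _ => Finset.sum_nonneg fun i _ => sq_nonneg _)
      intro j _
      have h := khintchine_nu N m hm1 (fun i => a i j)
      calc ∑ k ∈ K, ((∑ i ∈ I, a i j * nu N k i)^2)^m
          = ∑ k ∈ K, (∑ i ∈ I, a i j * nu N k i)^(2*m) := by
            exact Finset.sum_congr rfl fun k _ => by rw [← pow_mul]
        _ ≤ (dfac m : ℝ) * 2^N * (∑ i ∈ I, (a i j)^2)^m := by exact_mod_cast h
    calc ∑ k ∈ K, ∑ l ∈ K, (X k l)^(2*m)
        ≤ ∑ k ∈ K, (dfac m : ℝ) * 2^N * (∑ j ∈ I, (∑ i ∈ I, a i j * nu N k i)^2)^m :=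
          Finset.sum_le_sum fun k _ => hinnerK k
      _ = (dfac m : ℝ) * 2^N * ∑ k ∈ K, (∑ j ∈ I, (∑ i ∈ I, a i j * nu N k i)^2)^m := by
          rw [Finset.mul_sum]
      _ ≤ (dfac m : ℝ) * 2^N * (((dfac m : ℝ) * 2^N) * S2^m) := by
          apply mul_le_mul_of_nonneg_left hminkapp (by positivity)
      _ = ((dfac m : ℝ) * (2:ℝ)^N)^2 * S2^m := by ring
  -- Step 3: Jensen / power mean
  set P : ℝ := ((2:ℝ)^N)⁻¹ * ∑ k ∈ K, (((2:ℝ)^N)⁻¹ * ∑ l ∈ K, |X k l| ^ q) with hP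
  set p : ℝ := 2*(m:ℝ)/q with hp
  have hp1 : (1:ℝ) ≤ p := by
    rw [hp, le_div_iff₀ hq0]
    linarith
  have hwnn : ∀ i : ℕ, i ∈ K → (0:ℝ) ≤ ((2:ℝ)^N)⁻¹ := fun _ _ => by positivity
  have hwsum : ∑ _k ∈ K, ((2:ℝ)^N)⁻¹ = 1 := by
    rw [Finset.sum_const, hK, Finset.card_range, nsmul_eq_mul, hcard]
    field_simp
  have habsq : ∀ x : ℝ, (0:ℝ) ≤ |x| ^ q := fun x => Real.rpow_nonneg (abs_nonneg x) q
  have hzk : ∀ k, (0:ℝ) ≤ ((2:ℝ)^N)⁻¹ * ∑ l ∈ K, |X k l| ^ q := by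
    intro k
    apply mul_nonneg (by positivity)
    exact Finset.sum_nonneg fun l _ => habsq _
  have hm0 : (m:ℝ) ≠ 0 := by linarith
  have hqp : ∀ x : ℝ, (|x| ^ q) ^ p = x ^ (2*m) := by
    intro x
    have h1 : (|x| ^ q) ^ p = |x| ^ (q * p) := (Real.rpow_mul (abs_nonneg x) q p).symm
    have hqp2 : q * p = ((2*m : ℕ) : ℝ) := by
      rw [hp]; push_cast; field_simp
    rw [h1, hqp2, Real.rpow_natCast, pow_abs, abs_of_nonneg]
    exact Even.pow_nonneg (even_two_mul m) _
  have hJ : P ^ p ≤ (dfac m : ℝ)^2 * S2^m := by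
    have hout1 : P = ∑ k ∈ K, ((2:ℝ)^N)⁻¹ * (((2:ℝ)^N)⁻¹ * ∑ l ∈ K, |X k l| ^ q) := by
      rw [hP, Finset.mul_sum]
    have houtJ := Real.rpow_arith_mean_le_arith_mean_rpow K (fun _ => ((2:ℝ)^N)⁻¹)
      (fun k => ((2:ℝ)^N)⁻¹ * ∑ l ∈ K, |X k l| ^ q) hwnn hwsum (fun k _ => hzk k) hp1
    have hinnerJ : ∀ k, (((2:ℝ)^N)⁻¹ * ∑ l ∈ K, |X k l| ^ q)^p
        ≤ ((2:ℝ)^N)⁻¹ * ∑ l ∈ K, (X k l) ^ (2*m) := by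
      intro k
      have h := Real.rpow_arith_mean_le_arith_mean_rpow K (fun _ => ((2:ℝ)^N)⁻¹)
        (fun l => |X k l| ^ q) hwnn hwsum (fun l _ => habsq _) hp1
      calc (((2:ℝ)^N)⁻¹ * ∑ l ∈ K, |X k l| ^ q)^p
          = (∑ l ∈ K, ((2:ℝ)^N)⁻¹ * |X k l| ^ q)^p := by rw [Finset.mul_sum]
        _ ≤ ∑ l ∈ K, ((2:ℝ)^N)⁻¹ * (|X k l| ^ q)^p := h
        _ = ∑ l ∈ K, ((2:ℝ)^N)⁻¹ * (X k l)^(2*m) :=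
            Finset.sum_congr rfl fun l _ => by rw [hqp]
        _ = ((2:ℝ)^N)⁻¹ * ∑ l ∈ K, (X k l) ^ (2*m) := by rw [Finset.mul_sum]
    calc P ^ p
        = (∑ k ∈ K, ((2:ℝ)^N)⁻¹ * (((2:ℝ)^N)⁻¹ * ∑ l ∈ K, |X k l| ^ q))^p := by
          rw [← hout1]
      _ ≤ ∑ k ∈ K, ((2:ℝ)^N)⁻¹ * (((2:ℝ)^N)⁻¹ * ∑ l ∈ K, |X k l| ^ q)^p := houtJ
      _ ≤ ∑ k ∈ K, ((2:ℝ)^N)⁻¹ * (((2:ℝ)^N)⁻¹ * ∑ l ∈ K, (X k l)^(2*m)) :=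
          Finset.sum_le_sum fun k _ => mul_le_mul_of_nonneg_left (hinnerJ k) (by positivity)
      _ = ((2:ℝ)^N)⁻¹ * (((2:ℝ)^N)⁻¹ * ∑ k ∈ K, ∑ l ∈ K, (X k l)^(2*m)) := by
          rw [← Finset.mul_sum]
          congr 1
          rw [← Finset.mul_sum]
      _ ≤ ((2:ℝ)^N)⁻¹ * (((2:ℝ)^N)⁻¹ * (((dfac m : ℝ) * (2:ℝ)^N)^2 * S2^m)) := by
          apply mul_le_mul_of_nonneg_left _ (by positivity)
          apply mul_le_mul_of_nonneg_left hmom (by positivity)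
      _ = (dfac m : ℝ)^2 * S2^m := by field_simp
  -- Step 4: conclude
  rw [hout]
  have hPnn : 0 ≤ P := by
    rw [hP]
    apply mul_nonneg (by positivity)
    exact Finset.sum_nonneg fun k _ => hzk k
  have hstep : P ^ (1/q) = (P ^ p) ^ (1/(2*(m:ℝ))) := by
    have h1 : p * (1/(2*(m:ℝ))) = 1/q := by rw [hp]; field_simp
    rw [← h1, Real.rpow_mul hPnn]
  have hle1 : (P ^ p) ^ (1/(2*(m:ℝ))) ≤ ((dfac m : ℝ)^2 * S2^m) ^ (1/(2*(m:ℝ))) :=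
    Real.rpow_le_rpow (Real.rpow_nonneg hPnn p) hJ (by positivity)
  have hsplit : ((dfac m : ℝ)^2 * S2^m) ^ (1/(2*(m:ℝ)))
      = ((dfac m : ℝ)^2) ^ (1/(2*(m:ℝ))) * (S2^m) ^ (1/(2*(m:ℝ))) :=
    Real.mul_rpow (by positivity) (by positivity)
  have hA : ((dfac m : ℝ)^2) ^ (1/(2*(m:ℝ))) ≤ q := by
    have h1 : ((dfac m : ℝ)^2) ^ (1/(2*(m:ℝ))) = (dfac m : ℝ) ^ ((1:ℝ)/m) := by
      rw [← Real.rpow_natCast (dfac m : ℝ) 2, ← Real.rpow_mul (by positivity)]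
      congr 1
      push_cast
      field_simp
    rw [h1]
    have h2 : (dfac m : ℝ) ≤ q^m := dfac_le_qpow m hm1 q hq h2m2
    calc (dfac m : ℝ) ^ ((1:ℝ)/m) ≤ (q^m) ^ ((1:ℝ)/m) :=
        Real.rpow_le_rpow (by positivity) h2 (by positivity)
      _ = q := by
        rw [← Real.rpow_natCast q m, ← Real.rpow_mul hq0.le,
          show (m:ℝ) * ((1:ℝ)/m) = 1 from by field_simp]
        exact Real.rpow_one q
  have hB : (S2^m) ^ (1/(2*(m:ℝ))) = Real.sqrt S2 := by
    rw [← Real.rpow_natCast S2 m, ← Real.rpow_mul hS2nn,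
      show (m:ℝ) * (1/(2*(m:ℝ))) = 1/2 from by field_simp, ← Real.sqrt_eq_rpow]
  calc P ^ (1/q) = (P^p)^(1/(2*(m:ℝ))) := hstep
    _ ≤ ((dfac m:ℝ)^2 * S2^m)^(1/(2*(m:ℝ))) := hle1
    _ = ((dfac m:ℝ)^2)^(1/(2*(m:ℝ))) * (S2^m)^(1/(2*(m:ℝ))) := hsplit
    _ = ((dfac m:ℝ)^2)^(1/(2*(m:ℝ))) * Real.sqrt S2 := by rw [hB]
    _ ≤ q * Real.sqrt S2 := mul_le_mul_of_nonneg_right hA (Real.sqrt_nonneg _)
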